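/- For every integer n ≥ 2, (1/S_n) · Σ_{k=1}^{n} c_k² / (1 - c_k²/2)^{3/2} ≤ 2√2, where c_k = cos(π(2k-1)/(2n)) and S_n = Σ_{k=1}^{n-1} csc(πk/n). -/

import Mathlib

open Real Finset



lemma cos_ap_sum (n : ℕ) (hn : 2 ≤ n) :
    ∑ i ∈ Finset.range n, Real.cos (π * (2 * ((i:ℝ) + 1) - 1) / n) = 0 := by
  have hn' : (n:ℝ) ≠ 0 := by positivity
  have h2n : (2:ℝ) ≤ n := by exact_mod_cast hn
  have htel : ∑ i ∈ Finset.range n, (Real.sin (2*π*(i+1)/n) - Real.sin (2*π*i/n))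
      = Real.sin (2*π*n/n) - Real.sin (2*π*0/n) := by
    have := Finset.sum_range_sub (f := fun i : ℕ => Real.sin (2*π*i/n)) n
    simpa using this
  have hterm : ∀ i : ℕ, Real.sin (2*π*(i+1)/n) - Real.sin (2*π*i/n)
      = 2 * Real.sin (π/n) * Real.cos (π * (2 * ((i:ℝ) + 1) - 1) / n) := by
    intro i
    rw [Real.sin_sub_sin]
    congr 2
    · field_simp; ring
    · field_simp; ring
  have hs : Real.sin (π/n) ≠ 0 := by
    have h1 : 0 < π / n := by positivity
    have h2 : π / n < π := by
      rw [div_lt_iff₀ (by positivity)]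
      nlinarith [Real.pi_pos, mul_le_mul_of_nonneg_left h2n (le_of_lt Real.pi_pos)]
    exact ne_of_gt (Real.sin_pos_of_pos_of_lt_pi h1 h2)
  have h0 : (2 * Real.sin (π/n)) * ∑ i ∈ Finset.range n, Real.cos (π * (2 * ((i:ℝ) + 1) - 1) / n) = 0 := by
    rw [Finset.mul_sum]
    calc ∑ i ∈ Finset.range n, (2 * Real.sin (π/n)) * Real.cos (π * (2 * ((i:ℝ) + 1) - 1) / n)
        = ∑ i ∈ Finset.range n, (Real.sin (2*π*(i+1)/n) - Real.sin (2*π*i/n)) :=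
          Finset.sum_congr rfl fun i _ => (hterm i).symm
      _ = Real.sin (2*π*n/n) - Real.sin (2*π*0/n) := htel
      _ = 0 := by
          rw [show (2*π*(n:ℝ)/n) = 2*π by field_simp]
          simp [Real.sin_two_pi]
  have h2s : (2 * Real.sin (π/n)) ≠ 0 := by simpa using hs
  exact (mul_eq_zero.1 h0).resolve_left h2s

lemma cos_sq_sum (n : ℕ) (hn : 2 ≤ n) :
    ∑ k ∈ Finset.Icc 1 n, Real.cos (π * (2 * k - 1) / (2 * n)) ^ 2 = n / 2 := by
  have hn' : (n:ℝ) ≠ 0 := by positivity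
  have h1 : ∑ k ∈ Finset.Icc 1 n, Real.cos (π * (2 * k - 1) / (2 * n)) ^ 2
      = ∑ i ∈ Finset.range n, Real.cos (π * (2 * ((i:ℝ) + 1) - 1) / (2 * n)) ^ 2 := by
    rw [← Finset.Ico_add_one_right_eq_Icc, Finset.sum_Ico_eq_sum_range]
    refine Finset.sum_congr rfl fun i _ => ?_
    push_cast
    ring_nf
  rw [h1]
  have h2 : ∀ i : ℕ, Real.cos (π * (2 * ((i:ℝ) + 1) - 1) / (2 * n)) ^ 2
      = 1/2 + Real.cos (π * (2 * ((i:ℝ) + 1) - 1) / n) / 2 := by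
    intro i
    rw [Real.cos_sq]
    congr 2
    field_simp
  rw [Finset.sum_congr rfl fun i _ => h2 i, Finset.sum_add_distrib]
  have hdiv : ∑ x ∈ Finset.range n, Real.cos (π * (2 * ((x:ℝ) + 1) - 1) / n) / 2
      = (∑ x ∈ Finset.range n, Real.cos (π * (2 * ((x:ℝ) + 1) - 1) / n)) / 2 :=
    (Finset.sum_div ..).symm
  rw [hdiv, cos_ap_sum n hn]
  simp
  ring

lemma half_rpow : ((1/2:ℝ)) ^ ((3:ℝ)/2) * (2 * Real.sqrt 2) = 1 := by
  have h12 : ((1/2:ℝ)) ^ ((3:ℝ)/2) = Real.sqrt (1/2) ^ (3:ℕ) := by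
    rw [← Real.rpow_natCast (Real.sqrt (1/2)) 3, Real.sqrt_eq_rpow, ← Real.rpow_mul (by norm_num)]
    norm_num
  have hts : Real.sqrt (1/2) * Real.sqrt 2 = 1 := by
    rw [← Real.sqrt_mul (by norm_num)]
    norm_num
  rw [h12]
  calc Real.sqrt (1/2) ^ (3:ℕ) * (2 * Real.sqrt 2)
      = (Real.sqrt (1/2) ^ 2) * (Real.sqrt (1/2) * Real.sqrt 2) * 2 := by ring
    _ = 1 := by rw [Real.sq_sqrt (by norm_num), hts]; norm_num

theorem g_pi_quarter_le (n : ℕ) (hn : 2 ≤ n) :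
    (1 / (∑ k ∈ Finset.Icc 1 (n - 1), 1 / Real.sin (π * k / n))) *
        (∑ k ∈ Finset.Icc 1 n,
          Real.cos (π * (2 * k - 1) / (2 * n)) ^ 2 /
            (1 - Real.cos (π * (2 * k - 1) / (2 * n)) ^ 2 / 2) ^ ((3 : ℝ) / 2)) ≤
      2 * Real.sqrt 2 := by
  have h2n : (2:ℝ) ≤ n := by exact_mod_cast hn
  have hn0 : (0:ℝ) < n := by linarith
  set S := ∑ k ∈ Finset.Icc 1 (n-1), 1 / Real.sin (π * k / n) with hSdef
  set T := ∑ k ∈ Finset.Icc 1 n,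
      Real.cos (π * (2 * k - 1) / (2 * n)) ^ 2 /
        (1 - Real.cos (π * (2 * k - 1) / (2 * n)) ^ 2 / 2) ^ ((3 : ℝ) / 2) with hTdef
  -- sin positivity
  have hsinpos : ∀ k ∈ Finset.Icc 1 (n-1), 0 < Real.sin (π * k / n) := by
    intro k hk
    rw [Finset.mem_Icc] at hk
    have hk1 : (1:ℝ) ≤ k := by exact_mod_cast hk.1
    have hkn : (k:ℝ) < n := by
      have : k < n := lt_of_le_of_lt hk.2 (Nat.sub_lt (by omega) one_pos)
      exact_mod_cast this
    apply Real.sin_pos_of_pos_of_lt_pi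
    · have hk0 : (0:ℝ) < k := by linarith
      positivity
    · rw [div_lt_iff₀ hn0]
      nlinarith [Real.pi_pos]
  have hSge : (n:ℝ) - 1 ≤ S := by
    have hb : ∀ k ∈ Finset.Icc 1 (n-1), (1:ℝ) ≤ 1 / Real.sin (π * k / n) := by
      intro k hk
      have h1 := hsinpos k hk
      have h2 : Real.sin (π * k / n) ≤ 1 := Real.sin_le_one _
      rw [le_div_iff₀ h1]; linarith
    have hcard : ((Finset.Icc 1 (n-1)).card : ℝ) = (n:ℝ) - 1 := by
      rw [Nat.card_Icc]
      have h : (n-1) + 1 - 1 = n - 1 := by omega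
      rw [h, Nat.cast_sub (by omega)]; norm_num
    calc (n:ℝ) - 1 = (Finset.Icc 1 (n-1)).card • (1:ℝ) := by
          rw [nsmul_eq_mul, mul_one, hcard]
      _ ≤ S := Finset.card_nsmul_le_sum _ _ _ hb
  have hS0 : 0 < S := by linarith
  -- termwise bound
  have hterm : ∀ k ∈ Finset.Icc 1 n,
      Real.cos (π * (2 * k - 1) / (2 * n)) ^ 2 /
          (1 - Real.cos (π * (2 * k - 1) / (2 * n)) ^ 2 / 2) ^ ((3 : ℝ) / 2)
        ≤ 2 * Real.sqrt 2 * Real.cos (π * (2 * k - 1) / (2 * n)) ^ 2 := by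
    intro k _
    set c := Real.cos (π * (2 * k - 1) / (2 * n)) with hc
    have hc2 : c ^ 2 ≤ 1 := Real.cos_sq_le_one _
    have hbase : (1:ℝ)/2 ≤ 1 - c ^ 2 / 2 := by linarith
    have hd0 : (0:ℝ) < ((1/2:ℝ)) ^ ((3:ℝ)/2) := Real.rpow_pos_of_pos (by norm_num) _
    have hd : ((1/2:ℝ)) ^ ((3:ℝ)/2) ≤ (1 - c ^ 2 / 2) ^ ((3:ℝ)/2) :=
      Real.rpow_le_rpow (by norm_num) hbase (by norm_num)
    calc c ^ 2 / (1 - c ^ 2 / 2) ^ ((3:ℝ)/2) ≤ c ^ 2 / ((1/2:ℝ)) ^ ((3:ℝ)/2) := by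
          gcongr
      _ = 2 * Real.sqrt 2 * c ^ 2 := by
          rw [div_eq_iff (ne_of_gt hd0)]
          linear_combination (-(c ^ 2)) * half_rpow
  have hT0 : 0 ≤ T := by
    apply Finset.sum_nonneg
    intro k _
    have hc2 : Real.cos (π * (2 * k - 1) / (2 * n)) ^ 2 ≤ 1 := Real.cos_sq_le_one _
    have hbase : (0:ℝ) < 1 - Real.cos (π * (2 * k - 1) / (2 * n)) ^ 2 / 2 := by linarith
    exact div_nonneg (sq_nonneg _) (le_of_lt (Real.rpow_pos_of_pos hbase _))
  have hTle : T ≤ 2 * Real.sqrt 2 * ((n:ℝ) / 2) := by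
    calc T ≤ ∑ k ∈ Finset.Icc 1 n, 2 * Real.sqrt 2 * Real.cos (π * (2 * k - 1) / (2 * n)) ^ 2 :=
          Finset.sum_le_sum hterm
      _ = 2 * Real.sqrt 2 * ∑ k ∈ Finset.Icc 1 n, Real.cos (π * (2 * k - 1) / (2 * n)) ^ 2 :=
          (Finset.mul_sum ..).symm
      _ = 2 * Real.sqrt 2 * ((n:ℝ) / 2) := by rw [cos_sq_sum n hn]
  rw [one_div_mul_eq_div, div_le_iff₀ hS0]
  nlinarith [Real.sqrt_nonneg 2, hTle, hSge, h2n,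
    mul_nonneg (Real.sqrt_nonneg 2) (by linarith : (0:ℝ) ≤ S - ((n:ℝ) - 1)),
    mul_nonneg (Real.sqrt_nonneg 2) (by linarith : (0:ℝ) ≤ (n:ℝ) - 2)]
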